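/- Let Ψ be a nilpotent n×n matrix over a field F of characteristic not 2 with Ψⁿ = 0 and Ψ^{n-1} ≠ 0 (i.e., similar to a single nilpotent Jordan block), and suppose n is even. Then there exists a nonsingular skew-symmetric matrix M such that MΨ is symmetric. -/

import Mathlib

open Matrix

/-- If `Ψ` is similar to a single nilpotent Jordan block of even size `n`, then
there exists a nonsingular skew-symmetric `M` such that `M * Ψ` is symmetric. -/
theorem stmt4 {F : Type*} [Field F] (h2 : (2 : F) ≠ 0) {n : ℕ} (hn : Even n)
    (Ψ : Matrix (Fin n) (Fin n) F) (hnil : Ψ ^ n = 0) (hne : Ψ ^ (n - 1) ≠ 0) :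
    ∃ M : Matrix (Fin n) (Fin n) F, IsUnit M.det ∧ Mᵀ = -M ∧ (M * Ψ)ᵀ = M * Ψ := by
  -- n is positive
  have hn0 : 0 < n := by
    rcases Nat.eq_zero_or_pos n with h | h
    · exfalso; apply hne; subst h; exact Subsingleton.elim _ _
    · exact h
  -- transposed powers
  have hTnil : Ψᵀ ^ n = 0 := by rw [← transpose_pow, hnil, transpose_zero]
  have hTne : Ψᵀ ^ (n - 1) ≠ 0 := by
    rw [← transpose_pow]; simpa using fun h => hne (by simpa using congrArg transpose h)
  -- a vector w with (Ψᵀ)^(n-1) *ᵥ w ≠ 0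
  obtain ⟨w, hw⟩ : ∃ w : Fin n → F, Ψᵀ ^ (n - 1) *ᵥ w ≠ 0 := by
    by_contra hcon
    push_neg at hcon
    apply hTne
    ext i j
    have := congrFun (hcon (Pi.single j 1)) i
    simpa using this
  -- the cyclic vectors
  set u : ℕ → Fin n → F := fun k => Ψᵀ ^ k *ᵥ w with hu
  have hu_zero : ∀ m, n ≤ m → u m = 0 := by
    intro m hm
    have : Ψᵀ ^ m = 0 := by
      obtain ⟨c, rfl⟩ := Nat.exists_eq_add_of_le hm
      rw [pow_add, hTnil, zero_mul]
    simp [hu, this]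
  have hu_last : u (n - 1) ≠ 0 := hw
  have hu_succ : ∀ k, Ψᵀ *ᵥ u k = u (k + 1) := by
    intro k
    simp only [hu, mulVec_mulVec, ← pow_succ']
  have hu_add : ∀ e k, Ψᵀ ^ e *ᵥ u k = u (e + k) := by
    intro e k
    simp only [hu, mulVec_mulVec, ← pow_add]
  -- the matrices
  set U : Matrix (Fin n) (Fin n) F := Matrix.of (fun i k => u (k : ℕ) i) with hUdef
  set A : Matrix (Fin n) (Fin n) F :=
    Matrix.of (fun k l : Fin n => if (k : ℕ) + (l : ℕ) = n - 1 then (-1 : F) ^ (k : ℕ) else 0)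
    with hAdef
  set J : Matrix (Fin n) (Fin n) F :=
    Matrix.of (fun k l : Fin n => if (k : ℕ) = (l : ℕ) + 1 then (1 : F) else 0) with hJdef
  -- A is "skew": Aᵀ = -A  (uses n even)
  have hAT : Aᵀ = -A := by
    ext k l
    simp only [transpose_apply, Matrix.neg_apply, hAdef, Matrix.of_apply]
    by_cases h : (l : ℕ) + (k : ℕ) = n - 1
    · rw [if_pos h, if_pos (by omega)]
      have h1 : ((-1 : F)) ^ ((l : ℕ) + (k : ℕ)) = -1 := by
        rw [h]
        exact Odd.neg_one_pow (Nat.Even.sub_odd hn0 hn odd_one)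
      have h2 : ((-1 : F)) ^ (k : ℕ) * ((-1 : F)) ^ (k : ℕ) = 1 := by
        rw [← mul_pow]; norm_num
      calc ((-1 : F)) ^ (l : ℕ)
          = ((-1 : F)) ^ (l : ℕ) * (((-1 : F)) ^ (k : ℕ) * ((-1 : F)) ^ (k : ℕ)) := by
            rw [h2, mul_one]
        _ = (((-1 : F)) ^ ((l : ℕ) + (k : ℕ))) * ((-1 : F)) ^ (k : ℕ) := by
            rw [pow_add]; ring
        _ = -(-1 : F) ^ (k : ℕ) := by rw [h1]; ring
    · rw [if_neg h, if_neg (by omega), neg_zero]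
  -- A * A = -1
  have hAA : A * A = -1 := by
    ext k l
    rw [mul_apply]
    have hk : (k : ℕ) ≤ n - 1 := by omega
    set m₀ : Fin n := ⟨n - 1 - (k : ℕ), by omega⟩ with hm₀
    have hm₀v : (m₀ : ℕ) = n - 1 - (k : ℕ) := rfl
    rw [Finset.sum_eq_single m₀]
    · simp only [hAdef, Matrix.of_apply]
      rw [if_pos (by simp only [hm₀, Fin.val_mk] at *; omega)]
      by_cases h : (l : ℕ) = (k : ℕ)
      · rw [if_pos (by simp only [hm₀, Fin.val_mk] at *; omega)]
        have : ((-1 : F)) ^ (k : ℕ) * ((-1 : F)) ^ (n - 1 - (k : ℕ)) = -1 := by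
          rw [← pow_add]
          have : (k : ℕ) + (n - 1 - (k : ℕ)) = n - 1 := by omega
          rw [this]
          exact Odd.neg_one_pow (Nat.Even.sub_odd hn0 hn odd_one)
        rw [this]
        have : l = k := Fin.ext h
        simp [this, Matrix.neg_apply, one_apply]
      · rw [if_neg (by omega), mul_zero]
        have hkl : k ≠ l := fun hkl => h (by rw [hkl])
        simp [Matrix.neg_apply, one_apply, hkl]
    · intro m _ hm
      have : (k : ℕ) + (m : ℕ) ≠ n - 1 := by
        intro hc
        apply hm
        apply Fin.ext
        omega
      simp only [hAdef, Matrix.of_apply]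
      rw [if_neg this, zero_mul]
    · intro h
      exact absurd (Finset.mem_univ m₀) h
  -- J * A = -(A * Jᵀ)
  have hJA : J * A = -(A * Jᵀ) := by
    ext k l
    rw [Matrix.neg_apply, mul_apply, mul_apply]
    have lhs_eq : ∑ m, J k m * A m l
        = if (k : ℕ) + (l : ℕ) = n ∧ 1 ≤ (k : ℕ) then (-1 : F) ^ ((k : ℕ) - 1) else 0 := by
      by_cases hk1 : 1 ≤ (k : ℕ)
      · set m₀ : Fin n := ⟨(k : ℕ) - 1, by omega⟩ with hm₀
        rw [Finset.sum_eq_single m₀]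
        · simp only [hJdef, hAdef, Matrix.of_apply]
          rw [if_pos (by simp only [hm₀, Fin.val_mk] at *; omega)]
          by_cases h : (k : ℕ) + (l : ℕ) = n
          · rw [if_pos (by simp only [hm₀, Fin.val_mk] at *; omega), if_pos (by refine ⟨by simp only [hm₀, Fin.val_mk] at *; omega, ?_⟩; simp only [hm₀, Fin.val_mk] at *; omega), one_mul]
          · rw [if_neg (by simp only [hm₀, Fin.val_mk] at *; omega), if_neg (by tauto), mul_zero]
        · intro m _ hm
          simp only [hJdef, Matrix.of_apply]
          rw [if_neg, zero_mul]
          intro hc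
          exact hm (Fin.ext (by simp only [hm₀, Fin.val_mk] at *; omega))
        · intro h; exact absurd (Finset.mem_univ m₀) h
      · rw [if_neg (by tauto)]
        apply Finset.sum_eq_zero
        intro m _
        simp only [hJdef, Matrix.of_apply]
        rw [if_neg (by omega), zero_mul]
    have rhs_eq : ∑ m, A k m * Jᵀ m l
        = if (k : ℕ) + (l : ℕ) = n ∧ 1 ≤ (l : ℕ) then (-1 : F) ^ (k : ℕ) else 0 := by
      by_cases hl1 : 1 ≤ (l : ℕ)
      · set m₀ : Fin n := ⟨(l : ℕ) - 1, by omega⟩ with hm₀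
        rw [Finset.sum_eq_single m₀]
        · simp only [hJdef, hAdef, Matrix.of_apply, transpose_apply, Fin.val_mk]
          rw [if_pos (show (l : ℕ) = (l : ℕ) - 1 + 1 by omega), mul_one]
          by_cases h : (k : ℕ) + (l : ℕ) = n
          · rw [if_pos (show (k : ℕ) + ((l : ℕ) - 1) = n - 1 by omega), if_pos ⟨h, hl1⟩]
          · rw [if_neg (show ¬ (k : ℕ) + ((l : ℕ) - 1) = n - 1 by omega), if_neg (by tauto)]
        · intro m _ hm
          simp only [hJdef, Matrix.of_apply, transpose_apply]
          rw [if_neg, mul_zero]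
          intro hc
          exact hm (Fin.ext (by simp only [hm₀, Fin.val_mk] at *; omega))
        · intro h; exact absurd (Finset.mem_univ m₀) h
      · rw [if_neg (by tauto)]
        apply Finset.sum_eq_zero
        intro m _
        simp only [hJdef, Matrix.of_apply, transpose_apply]
        rw [if_neg (by omega), mul_zero]
    rw [lhs_eq, rhs_eq]
    by_cases h : (k : ℕ) + (l : ℕ) = n
    · have hk1 : 1 ≤ (k : ℕ) := by have := l.isLt; omega
      have hl1 : 1 ≤ (l : ℕ) := by have := k.isLt; omega
      rw [if_pos ⟨h, hk1⟩, if_pos ⟨h, hl1⟩]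
      have h1 : (-1 : F) ^ ((k : ℕ) - 1) * (-1) = (-1 : F) ^ (k : ℕ) := by
        rw [← pow_succ]
        congr 1
        omega
      rw [← h1]
      ring
    · rw [if_neg (by tauto), if_neg (by tauto), neg_zero]
  -- Ψᵀ * U = U * J
  have hΨU : Ψᵀ * U = U * J := by
    ext i l
    rw [mul_apply, mul_apply]
    have lhs_eq : ∑ j, Ψᵀ i j * U j l = u ((l : ℕ) + 1) i := by
      rw [← hu_succ]
      simp [mulVec, dotProduct, hUdef]
    rw [lhs_eq]
    by_cases h : (l : ℕ) + 1 < n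
    · set m₀ : Fin n := ⟨(l : ℕ) + 1, h⟩ with hm₀
      rw [Finset.sum_eq_single m₀]
      · simp [hUdef, hJdef, hm₀]
      · intro m _ hm
        simp only [hJdef, Matrix.of_apply]
        rw [if_neg, mul_zero]
        intro hc
        exact hm (Fin.ext (by simp only [hm₀, Fin.val_mk] at *; omega))
      · intro hc; exact absurd (Finset.mem_univ m₀) hc
    · have hl : (l : ℕ) + 1 = n := by have := l.isLt; omega
      have : u ((l : ℕ) + 1) i = 0 := by rw [hu_zero _ (le_of_eq hl.symm)]; rfl
      rw [this]
      symm
      apply Finset.sum_eq_zero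
      intro m _
      simp only [hJdef, Matrix.of_apply]
      rw [if_neg (by have := m.isLt; omega), mul_zero]
  -- U is invertible
  have hUdet : IsUnit U.det := by
    rw [isUnit_iff_ne_zero]
    intro hdet
    obtain ⟨v, hv, hUv⟩ := (Matrix.exists_mulVec_eq_zero_iff).mpr hdet
    -- the linear relation: ∑ k, v k • u k = 0
    have hrel : ∑ k : Fin n, v k • u (k : ℕ) = 0 := by
      ext i
      have := congrFun hUv i
      simpa [mulVec, dotProduct, hUdef, Finset.sum_apply, mul_comm] using this
    -- all coefficients vanish, by strong induction on the index
    have key : ∀ m : ℕ, ∀ k : Fin n, (k : ℕ) = m → v k = 0 := by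
      intro m
      induction m using Nat.strong_induction_on with
      | _ m ih =>
        intro k hk
        have happ : ∑ j : Fin n, v j • u ((n - 1 - (k : ℕ)) + (j : ℕ)) = 0 := by
          have := congrArg (fun x => (Ψᵀ ^ (n - 1 - (k : ℕ))).mulVecLin x) hrel
          simpa [map_sum, mulVecLin_apply, hu_add] using this
        have hsingle : v k • u (n - 1) = 0 := by
          have hk' : (n - 1 - (k : ℕ)) + (k : ℕ) = n - 1 := by have := k.isLt; omega
          rw [← hk', ← happ]
          symm
          apply Finset.sum_eq_single k
          · intro j _ hj
            rcases lt_or_gt_of_ne (fun hc : (j : ℕ) = (k : ℕ) => hj (Fin.ext hc)) with hlt | hgt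
            · rw [ih (j : ℕ) (by omega) j rfl, zero_smul]
            · rw [hu_zero ((n - 1 - (k : ℕ)) + (j : ℕ)) (by have := k.isLt; omega), smul_zero]
          · intro hc; exact absurd (Finset.mem_univ k) hc
        rcases smul_eq_zero.mp hsingle with h | h
        · exact h
        · exact absurd h hu_last
    apply hv
    ext k
    exact key (k : ℕ) k rfl
  -- A is invertible
  have hAdet : IsUnit A.det := by
    apply IsUnit.of_mul_eq_one A.det
    rw [← det_mul, hAA, det_neg, det_one, mul_one, Fintype.card_fin, hn.neg_one_pow]
  -- the matrix M
  refine ⟨U * A * Uᵀ, ?_, ?_, ?_⟩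
  · rw [det_mul, det_mul, det_transpose]
    exact (hUdet.mul hAdet).mul hUdet
  · rw [transpose_mul, transpose_mul, transpose_transpose, hAT]
    noncomm_ring
  · have hUT : Uᵀ * Ψ = Jᵀ * Uᵀ := by
      have := congrArg transpose hΨU
      rwa [transpose_mul, transpose_mul, transpose_transpose] at this
    have key : (A * Jᵀ)ᵀ = A * Jᵀ := by
      rw [transpose_mul, transpose_transpose, hAT, Matrix.mul_neg, hJA, neg_neg]
    have hMΨ : U * A * Uᵀ * Ψ = U * (A * Jᵀ) * Uᵀ := by
      rw [Matrix.mul_assoc (U * A) Uᵀ Ψ, hUT]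
      noncomm_ring
    rw [hMΨ, transpose_mul, transpose_mul, transpose_transpose, key, ← Matrix.mul_assoc]
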